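/- For all real t with 0 ≤ t < π/2, -2·ln(cos t) ≥ t²·(1 + t²/6 + (2/45)·t⁴). -/

import Mathlib

open Real

/-- Generic monotonicity helper on `[0, t]`. -/
lemma aux_mono {t : ℝ} (ht : 0 ≤ t) {f f' : ℝ → ℝ}
    (hd : ∀ x ∈ Set.Icc (0:ℝ) t, HasDerivAt f (f' x) x)
    (h0 : ∀ x ∈ Set.Icc (0:ℝ) t, 0 ≤ f' x) : f 0 ≤ f t := by
  have hmono : MonotoneOn f (Set.Icc 0 t) := by
    apply monotoneOn_of_deriv_nonneg (convex_Icc 0 t)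
    · exact fun x hx => (hd x hx).continuousAt.continuousWithinAt
    · intro x hx
      have hx' : x ∈ Set.Icc (0:ℝ) t := by
        rw [interior_Icc] at hx; exact Set.mem_Icc_of_Ioo hx
      exact (hd x hx').differentiableAt.differentiableWithinAt
    · intro x hx
      have hx' : x ∈ Set.Icc (0:ℝ) t := by
        rw [interior_Icc] at hx; exact Set.mem_Icc_of_Ioo hx
      rw [(hd x hx').deriv]
      exact h0 x hx'
  exact hmono (Set.left_mem_Icc.2 ht) (Set.right_mem_Icc.2 ht) ht

lemma aux_sin_ge_cubic {t : ℝ} (ht : 0 ≤ t) : t - t^3/6 ≤ Real.sin t := by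
  have h := aux_mono ht (f := fun x => Real.sin x - (x - x^3/6))
      (f' := fun x => Real.cos x - (1 - x^2/2))
      (fun x _ => by
        have : HasDerivAt (fun x : ℝ => Real.sin x - (x - x^3/6))
            (Real.cos x - (1 - (3:ℕ) * x^2/6)) x :=
          (Real.hasDerivAt_sin x).sub ((hasDerivAt_id x).sub ((hasDerivAt_pow 3 x).div_const 6))
        convert this using 1; push_cast; ring)
      (fun x _ => by
        have := Real.one_sub_sq_div_two_le_cos (x := x); linarith)
  simp at h; linarith

lemma aux_cos_le_quartic {t : ℝ} (ht : 0 ≤ t) :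
    Real.cos t ≤ 1 - t^2/2 + t^4/24 := by
  have h := aux_mono ht (f := fun x => 1 - x^2/2 + x^4/24 - Real.cos x)
      (f' := fun x => Real.sin x - (x - x^3/6))
      (fun x _ => by
        have : HasDerivAt (fun x : ℝ => 1 - x^2/2 + x^4/24 - Real.cos x)
            ((0 - (2:ℕ) * x^1/2 + (4:ℕ) * x^3/24) - (-Real.sin x)) x :=
          (((hasDerivAt_const x (1:ℝ)).sub ((hasDerivAt_pow 2 x).div_const 2)).add
            ((hasDerivAt_pow 4 x).div_const 24)).sub (Real.hasDerivAt_cos x)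
        convert this using 1; push_cast; ring)
      (fun x hx => by
        have := aux_sin_ge_cubic hx.1; linarith)
  simp at h; linarith

lemma aux_sin_le_quintic {t : ℝ} (ht : 0 ≤ t) :
    Real.sin t ≤ t - t^3/6 + t^5/120 := by
  have h := aux_mono ht (f := fun x => x - x^3/6 + x^5/120 - Real.sin x)
      (f' := fun x => 1 - x^2/2 + x^4/24 - Real.cos x)
      (fun x _ => by
        have : HasDerivAt (fun x : ℝ => x - x^3/6 + x^5/120 - Real.sin x)
            ((1 - (3:ℕ) * x^2/6 + (5:ℕ) * x^4/120) - Real.cos x) x :=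
          (((hasDerivAt_id x).sub ((hasDerivAt_pow 3 x).div_const 6)).add
            ((hasDerivAt_pow 5 x).div_const 120)).sub (Real.hasDerivAt_sin x)
        convert this using 1; push_cast; ring)
      (fun x hx => by
        have := aux_cos_le_quartic hx.1; linarith)
  simp at h; linarith

lemma aux_cos_ge_sextic {t : ℝ} (ht : 0 ≤ t) :
    1 - t^2/2 + t^4/24 - t^6/720 ≤ Real.cos t := by
  have h := aux_mono ht (f := fun x => Real.cos x - (1 - x^2/2 + x^4/24 - x^6/720))
      (f' := fun x => (x - x^3/6 + x^5/120) - Real.sin x)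
      (fun x _ => by
        have : HasDerivAt (fun x : ℝ => Real.cos x - (1 - x^2/2 + x^4/24 - x^6/720))
            (-Real.sin x - (0 - (2:ℕ) * x^1/2 + (4:ℕ) * x^3/24 - (6:ℕ) * x^5/720)) x :=
          (Real.hasDerivAt_cos x).sub
            ((((hasDerivAt_const x (1:ℝ)).sub ((hasDerivAt_pow 2 x).div_const 2)).add
              ((hasDerivAt_pow 4 x).div_const 24)).sub ((hasDerivAt_pow 6 x).div_const 720))
        convert this using 1; push_cast; ring)
      (fun x hx => by
        have := aux_sin_le_quintic hx.1; linarith)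
  simp at h; linarith

lemma aux_sin_ge_septic {t : ℝ} (ht : 0 ≤ t) :
    t - t^3/6 + t^5/120 - t^7/5040 ≤ Real.sin t := by
  have h := aux_mono ht (f := fun x => Real.sin x - (x - x^3/6 + x^5/120 - x^7/5040))
      (f' := fun x => Real.cos x - (1 - x^2/2 + x^4/24 - x^6/720))
      (fun x _ => by
        have : HasDerivAt (fun x : ℝ => Real.sin x - (x - x^3/6 + x^5/120 - x^7/5040))
            (Real.cos x - ((1 - (3:ℕ) * x^2/6 + (5:ℕ) * x^4/120) - (7:ℕ) * x^6/5040)) x :=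
          (Real.hasDerivAt_sin x).sub
            ((((hasDerivAt_id x).sub ((hasDerivAt_pow 3 x).div_const 6)).add
              ((hasDerivAt_pow 5 x).div_const 120)).sub ((hasDerivAt_pow 7 x).div_const 5040))
        convert this using 1; push_cast; ring)
      (fun x hx => by
        have := aux_cos_ge_sextic hx.1; linarith)
  simp at h; linarith

lemma aux_tan_lower {x : ℝ} (hx : 0 ≤ x) (hx2 : x < π/2) :
    x + x^3/3 + 2*x^5/15 ≤ Real.sin x / Real.cos x := by
  have hc : 0 < Real.cos x := Real.cos_pos_of_mem_Ioo
    ⟨by linarith [Real.pi_pos], hx2⟩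
  rw [le_div_iff₀ hc]
  have hs := aux_sin_ge_septic hx
  have hcu := aux_cos_le_quartic hx
  have hxlt : x < 1.575 := lt_of_lt_of_le hx2 (by nlinarith [Real.pi_lt_d2])
  have hp : 0 ≤ x + x^3/3 + 2*x^5/15 := by positivity
  have hx2' : x^2 ≤ 2.480625 := by nlinarith
  nlinarith [mul_le_mul_of_nonneg_left hcu hp,
    mul_le_mul_of_nonneg_left hx2' (pow_nonneg hx 7), pow_nonneg hx 7]

theorem stmt_1 (t : ℝ) (h1 : 0 ≤ t) (h2 : t < π/2) :
    -2 * Real.log (Real.cos t) ≥ t^2 * (1 + t^2/6 + (2/45) * t^4) := by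
  have key : t^2/2 + t^4/12 + t^6/45 ≤ -Real.log (Real.cos t) := by
    have h := aux_mono h1 (f := fun x => -Real.log (Real.cos x) - (x^2/2 + x^4/12 + x^6/45))
        (f' := fun x => Real.sin x / Real.cos x - (x + x^3/3 + 2*x^5/15))
        (fun x hx => by
          have hc : Real.cos x ≠ 0 := by
            have : 0 < Real.cos x := Real.cos_pos_of_mem_Ioo
              ⟨by linarith [Real.pi_pos, hx.1], lt_of_le_of_lt hx.2 h2⟩
            linarith
          have hlog : HasDerivAt (fun x : ℝ => -Real.log (Real.cos x))
              (-(-Real.sin x / Real.cos x)) x :=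
            ((Real.hasDerivAt_cos x).log hc).neg
          have hpoly : HasDerivAt (fun x : ℝ => x^2/2 + x^4/12 + x^6/45)
              ((2:ℕ) * x^1/2 + (4:ℕ) * x^3/12 + (6:ℕ) * x^5/45) x :=
            (((hasDerivAt_pow 2 x).div_const 2).add ((hasDerivAt_pow 4 x).div_const 12)).add
              ((hasDerivAt_pow 6 x).div_const 45)
          have : HasDerivAt (fun x : ℝ => -Real.log (Real.cos x) - (x^2/2 + x^4/12 + x^6/45))
              (-(-Real.sin x / Real.cos x) - ((2:ℕ) * x^1/2 + (4:ℕ) * x^3/12 + (6:ℕ) * x^5/45)) x :=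
            hlog.sub hpoly
          convert this using 1; push_cast; ring)
        (fun x hx => by
          have := aux_tan_lower hx.1 (lt_of_le_of_lt hx.2 h2); linarith)
    simp at h; linarith
  nlinarith [key]
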